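/- Let w : ℕ → (0,∞) be decreasing with w(1) = 1, w(k) → 0 and ∑ₖ w(k) = ∞, let 0 < p < n, and set Ψ(N) = (∑_{k=1}^N w(k))^{n/p}. Suppose α : ℕ → [0,∞) is decreasing and there is a constant M with ∑_{k=1}^N α(k) ≤ M·Ψ(N) for all N. Then for every decreasing nonnegative sequence x and every N, ∑_{k=1}^N α(k) x(k)^n ≤ M · ( ∑_{k=1}^N w(k) x(k)^p )^{n/p}. -/

import Mathlib

open Finset

private lemma phi_mono {q : ℝ} (hq : 1 ≤ q) {c : ℝ} (hc : 0 ≤ c) :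
    MonotoneOn (fun s : ℝ => (s + c) ^ q - s ^ q) (Set.Ici (0:ℝ)) := by
  have hq0 : (0:ℝ) ≤ q := le_trans zero_le_one hq
  have hder : ∀ s : ℝ, HasDerivAt (fun s : ℝ => (s + c) ^ q - s ^ q)
      (q * (s + c) ^ (q - 1) * 1 - q * s ^ (q - 1)) s := by
    intro s
    exact ((Real.hasDerivAt_rpow_const (Or.inr hq)).comp s
      ((hasDerivAt_id s).add_const c)).sub (Real.hasDerivAt_rpow_const (Or.inr hq))
  apply monotoneOn_of_deriv_nonneg (convex_Ici 0)
  · exact fun s _ => (hder s).differentiableAt.continuousAt.continuousWithinAt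
  · exact fun s _ => (hder s).differentiableAt.differentiableWithinAt
  · intro s hs
    rw [(hder s).deriv]
    have hs0 : (0:ℝ) ≤ s := by
      rw [interior_Ici] at hs; exact le_of_lt hs
    have h1 : s ^ (q - 1) ≤ (s + c) ^ (q - 1) :=
      Real.rpow_le_rpow hs0 (by linarith) (by linarith)
    nlinarith [mul_le_mul_of_nonneg_left h1 hq0]

private lemma phi_le {q : ℝ} (hq : 1 ≤ q) {a b c : ℝ} (ha : 0 ≤ a) (hab : a ≤ b)
    (hc : 0 ≤ c) : (a + c) ^ q - a ^ q ≤ (b + c) ^ q - b ^ q :=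
  phi_mono hq hc (Set.mem_Ici.mpr ha) (Set.mem_Ici.mpr (le_trans ha hab)) hab

private lemma Lbound (w : ℕ → ℝ) (hw : ∀ k, 0 ≤ w k) {q : ℝ} (hq : 1 ≤ q)
    (t : ℕ → ℝ) (ht : Antitone t) (ht0 : ∀ k, 0 ≤ t k) :
    ∀ N : ℕ, ∑ k ∈ range N, (∑ j ∈ range (k+1), w j) ^ q * (t k ^ q - t (k+1) ^ q)
        + (∑ j ∈ range N, w j) ^ q * t N ^ q
      ≤ (∑ k ∈ range N, w k * t k) ^ q := by
  have hqpos : (0:ℝ) < q := lt_of_lt_of_le one_pos hq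
  intro N
  induction N with
  | zero => simp [Real.zero_rpow hqpos.ne']
  | succ N ih =>
    have hWN : (0:ℝ) ≤ ∑ j ∈ range N, w j := Finset.sum_nonneg fun j _ => hw j
    have hS0 : (0:ℝ) ≤ ∑ k ∈ range N, w k * t k :=
      Finset.sum_nonneg fun k _ => mul_nonneg (hw k) (ht0 k)
    have hab : (∑ j ∈ range N, w j) * t N ≤ ∑ k ∈ range N, w k * t k := by
      rw [Finset.sum_mul]
      refine Finset.sum_le_sum fun k hk => ?_
      exact mul_le_mul_of_nonneg_left (ht (le_of_lt (Finset.mem_range.mp hk))) (hw k)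
    have key := phi_le hq (mul_nonneg hWN (ht0 N)) hab (mul_nonneg (hw N) (ht0 N))
    have e1 : (∑ j ∈ range N, w j) * t N + w N * t N
        = (∑ j ∈ range N, w j + w N) * t N := by ring
    have e2 : ((∑ j ∈ range N, w j + w N) * t N) ^ q
        = (∑ j ∈ range N, w j + w N) ^ q * t N ^ q :=
      Real.mul_rpow (add_nonneg hWN (hw N)) (ht0 N)
    have e3 : ((∑ j ∈ range N, w j) * t N) ^ q
        = (∑ j ∈ range N, w j) ^ q * t N ^ q := Real.mul_rpow hWN (ht0 N)
    rw [e1, e2, e3] at key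
    rw [Finset.sum_range_succ, Finset.sum_range_succ (f := fun k => w k * t k),
      Finset.sum_range_succ (f := fun j => w j)]
    linarith [key, ih]

private lemma abel_id (α : ℕ → ℝ) (s : ℕ → ℝ) :
    ∀ N : ℕ, ∑ k ∈ range N, α k * s k
      = ∑ k ∈ range N, (∑ j ∈ range (k+1), α j) * (s k - s (k+1))
        + (∑ j ∈ range N, α j) * s N := by
  intro N
  induction N with
  | zero => simp
  | succ N ih =>
    rw [Finset.sum_range_succ (f := fun k => α k * s k), ih,
      Finset.sum_range_succ (f := fun k => (∑ j ∈ range (k+1), α j) * (s k - s (k+1))),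
      Finset.sum_range_succ (f := α)]
    ring

/-- Forward direction of Theorem 1(b): if `α` is decreasing, nonnegative and satisfies the
Marcinkiewicz condition `∑_{k<N} α(k) ≤ M Ψ(N)` with `Ψ(N) = (∑_{k<N} w(k))^{n/p}`, then for
every decreasing nonnegative `x` and every `N`,
`∑_{k<N} α(k) x(k)^n ≤ M (∑_{k<N} w(k) x(k)^p)^{n/p}`. (Sequences indexed from `0`.) -/
theorem stmt6 (w : ℕ → ℝ) (hw : ∀ k, 0 < w k) (hwa : Antitone w) (hw1 : w 0 = 1)
    (hw0 : Filter.Tendsto w Filter.atTop (nhds 0)) (hwns : ¬ Summable w)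
    (p : ℝ) (n : ℕ) (hp : 0 < p) (hpn : p < n)
    (α : ℕ → ℝ) (hαa : Antitone α) (hα0 : ∀ k, 0 ≤ α k) (M : ℝ)
    (hM : ∀ N : ℕ, ∑ k ∈ Finset.range N, α k ≤
        M * (∑ k ∈ Finset.range N, w k) ^ ((n : ℝ) / p)) :
    ∀ x : ℕ → ℝ, Antitone x → (∀ k, 0 ≤ x k) → ∀ N : ℕ,
      ∑ k ∈ Finset.range N, α k * x k ^ (n : ℝ) ≤
        M * (∑ k ∈ Finset.range N, w k * x k ^ p) ^ ((n : ℝ) / p) := by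
  intro x hx hx0 N
  set q : ℝ := (n : ℝ) / p with hqdef
  have hq : 1 ≤ q := by
    rw [hqdef, le_div_iff₀ hp]; linarith
  have hq0 : (0:ℝ) ≤ q := le_trans zero_le_one hq
  have hM0 : 0 ≤ M := by
    have h1 := hM 1
    simp [hw1] at h1
    exact le_trans (hα0 0) h1
  have ht0 : ∀ k, 0 ≤ x k ^ p := fun k => Real.rpow_nonneg (hx0 k) p
  have ht : Antitone (fun k => x k ^ p) := fun a b hab =>
    Real.rpow_le_rpow (hx0 b) (hx hab) (le_of_lt hp)
  have hxn : ∀ k, x k ^ (n : ℝ) = (x k ^ p) ^ q := by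
    intro k
    rw [← Real.rpow_mul (hx0 k)]
    congr 1
    rw [hqdef]; field_simp
  have hs : Antitone (fun k => (x k ^ p) ^ q) := fun a b hab =>
    Real.rpow_le_rpow (ht0 b) (ht hab) hq0
  have key := Lbound w (fun k => (hw k).le) hq (fun k => x k ^ p) ht ht0 N
  calc ∑ k ∈ range N, α k * x k ^ (n : ℝ)
      = ∑ k ∈ range N, (∑ j ∈ range (k+1), α j) * (x k ^ (n:ℝ) - x (k+1) ^ (n:ℝ))
        + (∑ j ∈ range N, α j) * x N ^ (n:ℝ) := abel_id α (fun k => x k ^ (n:ℝ)) N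
    _ = ∑ k ∈ range N, (∑ j ∈ range (k+1), α j) * ((x k ^ p) ^ q - (x (k+1) ^ p) ^ q)
        + (∑ j ∈ range N, α j) * (x N ^ p) ^ q := by simp only [hxn]
    _ ≤ ∑ k ∈ range N, (M * (∑ j ∈ range (k+1), w j) ^ q) * ((x k ^ p) ^ q - (x (k+1) ^ p) ^ q)
        + (M * (∑ j ∈ range N, w j) ^ q) * (x N ^ p) ^ q := by
      gcongr with k hk
      · exact sub_nonneg.mpr (hs (Nat.le_succ k))
      · exact hM (k+1)
      · exact Real.rpow_nonneg (ht0 N) q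
      · exact hM N
    _ = M * (∑ k ∈ range N, (∑ j ∈ range (k+1), w j) ^ q * ((x k ^ p) ^ q - (x (k+1) ^ p) ^ q)
        + (∑ j ∈ range N, w j) ^ q * (x N ^ p) ^ q) := by
      rw [mul_add, Finset.mul_sum]
      simp only [mul_assoc]
    _ ≤ M * (∑ k ∈ range N, w k * x k ^ p) ^ q := mul_le_mul_of_nonneg_left key hM0
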